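/- Let Q be a finite quiver and a, b arrows with t(a)=i_a, h(a)=j_a, t(b)=i_b, h(b)=j_b. Suppose every path in Q from t(b) to h(a) is of the form qb or aq for some path q. Then Ext¹_{KQ}(C(a), C(b)) = 0. -/

import Mathlib

open Quiver

universe w v u

/-- A representation of a quiver `V` over a field `K`: a vector space at each vertex
and a linear map for each arrow. -/
structure QRep (K : Type u) [Field K] (V : Type v) [Quiver.{v} V] where
  space : V → Type w
  [isAddCommGroup : ∀ i, AddCommGroup (space i)]
  [isModule : ∀ i, Module K (space i)]
  map : ∀ {i j : V}, (i ⟶ j) → (space i →ₗ[K] space j)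

attribute [instance] QRep.isAddCommGroup QRep.isModule

/-- A morphism of quiver representations. -/
structure QRepHom {K : Type u} [Field K] {V : Type v} [Quiver.{v} V]
    (X Y : QRep.{w} K V) where
  app : ∀ i, X.space i →ₗ[K] Y.space i
  comm : ∀ {i j : V} (a : i ⟶ j), (Y.map a).comp (app i) = (app j).comp (X.map a)

/-- The projective representation `KQe_i`: at vertex `j` it has basis the paths `i ⟶ j`,
and arrows act by postcomposition. -/
noncomputable def projRep (K : Type u) [Field K] (V : Type v) [Quiver.{v} V] (i : V) :
    QRep.{max u v} K V where
  space j := Path i j →₀ K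
  map a := Finsupp.lmapDomain K K (fun p => p.cons a)

/-- Right multiplication by an arrow `a : i ⟶ j`, as a morphism `KQe_j → KQe_i`. -/
noncomputable def rmulArrow {K : Type u} [Field K] {V : Type v} [Quiver.{v} V]
    {i j : V} (a : i ⟶ j) : QRepHom (projRep K V j) (projRep K V i) where
  app k := Finsupp.lmapDomain K K (fun p : Path j k => (a.toPath).comp p)
  comm := by
    intro k l b
    refine Finsupp.lhom_ext fun p c => ?_
    show Finsupp.mapDomain _ (Finsupp.mapDomain _ (Finsupp.single p c)) =
      Finsupp.mapDomain _ (Finsupp.mapDomain _ (Finsupp.single p c))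
    simp [Finsupp.mapDomain_single, Quiver.Path.comp_cons]

/-- The cokernel representation of a morphism of representations. -/
noncomputable def cokerRep {K : Type u} [Field K] {V : Type v} [Quiver.{v} V]
    {F X : QRep.{w} K V} (f : QRepHom F X) : QRep.{w} K V where
  space i := X.space i ⧸ LinearMap.range (f.app i)
  map {i j} a := Submodule.mapQ _ _ (X.map a) (by
    rintro x ⟨y, rfl⟩
    exact ⟨F.map a y, by
      rw [← LinearMap.comp_apply, ← f.comm, LinearMap.comp_apply]⟩)

/-- The projection onto the cokernel representation. -/
noncomputable def cokerProj {K : Type u} [Field K] {V : Type v} [Quiver.{v} V]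
    {F X : QRep.{w} K V} (f : QRepHom F X) : QRepHom X (cokerRep f) where
  app i := (LinearMap.range (f.app i)).mkQ
  comm {i j} a := Submodule.mapQ_mkQ _ _ (h := by
    rintro x ⟨y, rfl⟩
    exact ⟨F.map a y, by
      rw [← LinearMap.comp_apply, ← f.comm, LinearMap.comp_apply]⟩)

/-- The representation `C(a) = KQe_{t(a)}/KQa` for an arrow `a : i ⟶ j`. -/
noncomputable def Ca {K : Type u} [Field K] {V : Type v} [Quiver.{v} V]
    {i j : V} (a : i ⟶ j) : QRep.{max u v} K V :=
  cokerRep (rmulArrow (K := K) a)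

/-- `Hom(A,B) = 0` in the category of representations. -/
def HomVanishes {K : Type u} [Field K] {V : Type v} [Quiver.{v} V]
    (A B : QRep.{w} K V) : Prop :=
  ∀ θ : QRepHom A B, ∀ (k : V) (x : A.space k), θ.app k x = 0

/-- `u, v` form a short exact sequence `0 → X → E → Z → 0` of representations. -/
def IsSES {K : Type u} [Field K] {V : Type v} [Quiver.{v} V]
    {X E Z : QRep.{w} K V} (u : QRepHom X E) (v : QRepHom E Z) : Prop :=
  ∀ k : V, Function.Injective (u.app k) ∧ Function.Surjective (v.app k) ∧
    LinearMap.range (u.app k) = LinearMap.ker (v.app k)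

/-- `Ext¹(Z,X) = 0`: every short exact sequence `0 → X → E → Z → 0` of
representations splits. -/
def ExtVanishes {K : Type u} [Field K] {V : Type v} [Quiver.{v} V]
    (Z X : QRep.{w} K V) : Prop :=
  ∀ (E : QRep.{w} K V) (u : QRepHom X E) (v : QRepHom E Z), IsSES u v →
    ∃ s : QRepHom Z E, ∀ k : V, (v.app k).comp (s.app k) = LinearMap.id

/-- Action of a path on a representation. -/
noncomputable def pathMap {K : Type u} [Field K] {V : Type v} [Quiver.{v} V]
    (X : QRep.{w} K V) : ∀ {i j : V}, Path i j → (X.space i →ₗ[K] X.space j)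
  | _, _, Path.nil => LinearMap.id
  | _, _, Path.cons p c => (X.map c).comp (pathMap X p)

@[simp] lemma pathMap_nil {K : Type u} [Field K] {V : Type v} [Quiver.{v} V]
    (X : QRep.{w} K V) (i : V) :
    pathMap X (Path.nil : Path i i) = LinearMap.id := by simp [pathMap]

@[simp] lemma pathMap_cons {K : Type u} [Field K] {V : Type v} [Quiver.{v} V]
    (X : QRep.{w} K V) {i j k : V} (p : Path i j) (c : j ⟶ k) :
    pathMap X (p.cons c) = (X.map c).comp (pathMap X p) := by simp [pathMap]

lemma hom_pathMap {K : Type u} [Field K] {V : Type v} [Quiver.{v} V]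
    {X Y : QRep.{w} K V} (θ : QRepHom X Y) {i j : V} (p : Path i j) :
    (θ.app j).comp (pathMap X p) = (pathMap Y p).comp (θ.app i) := by
  induction p with
  | nil => simp
  | cons p c ih =>
      rw [pathMap_cons, pathMap_cons, ← LinearMap.comp_assoc, ← θ.comm c,
        LinearMap.comp_assoc, ih, ← LinearMap.comp_assoc]

lemma pathMap_comp {K : Type u} [Field K] {V : Type v} [Quiver.{v} V]
    (X : QRep.{w} K V) {i j k : V} (p : Path i j) (q : Path j k) :
    pathMap X (p.comp q) = (pathMap X q).comp (pathMap X p) := by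
  induction q with
  | nil => simp
  | cons q c ih =>
      rw [Path.comp_cons, pathMap_cons, pathMap_cons, ih, LinearMap.comp_assoc]

lemma pathMap_projRep {K : Type u} [Field K] {V : Type v} [Quiver.{v} V]
    {i j k : V} (p : Path j k) (q : Path i j) (c : K) :
    pathMap (projRep K V i) p (Finsupp.single q c) = Finsupp.single (q.comp p) c := by
  induction p with
  | nil => simp; rfl
  | cons p e ih =>
      erw [pathMap_cons, LinearMap.comp_apply, ih]
      show Finsupp.mapDomain (fun r => r.cons e) (Finsupp.single (q.comp p) c) = _
      rw [Finsupp.mapDomain_single, Path.comp_cons]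

lemma cokerRep_map_mk {K : Type u} [Field K] {V : Type v} [Quiver.{v} V]
    {F X : QRep.{w} K V} (f : QRepHom F X) {i j : V} (c : i ⟶ j) (x : X.space i) :
    (cokerRep f).map c (Submodule.Quotient.mk x) = Submodule.Quotient.mk (X.map c x) := rfl

lemma projRep_map_single {K : Type u} [Field K] {V : Type v} [Quiver.{v} V]
    {i j k : V} (c : j ⟶ k) (p : Path i j) (d : K) :
    (projRep K V i).map c (Finsupp.single p d) = Finsupp.single (p.cons c) d := by
  show Finsupp.mapDomain (fun r => r.cons c) (Finsupp.single p d) = _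
  rw [Finsupp.mapDomain_single]

lemma rmulArrow_app_single {K : Type u} [Field K] {V : Type v} [Quiver.{v} V]
    {i j k : V} (a : i ⟶ j) (p : Path j k) (d : K) :
    (rmulArrow (K := K) a).app k (Finsupp.single p d) = Finsupp.single ((a.toPath).comp p) d := by
  show Finsupp.mapDomain (fun r => (a.toPath).comp r) (Finsupp.single p d) = _
  rw [Finsupp.mapDomain_single]

/-- If every path from `t(b)` to `h(a)` has the form `q b` or `a q`, then
`Ext¹(C(a), C(b)) = 0`. -/
theorem ext_Ca_Cb_eq_zero {K : Type u} [Field K] {V : Type v} [Quiver.{v} V]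
    [Fintype V] [∀ i j : V, Fintype (i ⟶ j)]
    {ia ja ib jb : V} (a : ia ⟶ ja) (b : ib ⟶ jb)
    (hpaths : ∀ p : Path ib ja,
      (∃ q : Path jb ja, p = (b.toPath).comp q) ∨ (∃ q : Path ib ia, p = q.cons a)) :
    ExtVanishes (Ca (K := K) a) (Ca (K := K) b) := by
  intro E u v hses
  -- `(Ca b).map a` is surjective
  have hsurj : Function.Surjective ((Ca (K := K) b).map a) := by
    intro x
    obtain ⟨f, rfl⟩ := Submodule.mkQ_surjective _ x
    rw [Submodule.mkQ_apply]
    induction f using Finsupp.induction_linear with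
    | zero => exact ⟨0, by simp; rfl⟩
    | add f g hf hg =>
        obtain ⟨zf, hzf⟩ := hf
        obtain ⟨zg, hzg⟩ := hg
        exact ⟨zf + zg, by rw [map_add, hzf, hzg]; rfl⟩
    | single p c =>
        rcases hpaths p with ⟨q, rfl⟩ | ⟨q, rfl⟩
        · refine ⟨0, ?_⟩
          rw [map_zero]
          refine ((Submodule.Quotient.mk_eq_zero _).mpr ?_).symm
          exact ⟨Finsupp.single q c, rmulArrow_app_single b q c⟩
        · exact ⟨Submodule.Quotient.mk (Finsupp.single q c),
            (cokerRep_map_mk (rmulArrow (K := K) b) a _).trans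
              (congrArg Submodule.Quotient.mk (projRep_map_single a q c))⟩
  -- pick a preimage of the generator of `Ca a`
  obtain ⟨x, hx⟩ := (hses ia).2.1 (Submodule.Quotient.mk (Finsupp.single Path.nil 1))
  -- `E.map a x ∈ ker (v.app ja) = range (u.app ja)`
  have hker : E.map a x ∈ LinearMap.ker (v.app ja) := by
    rw [LinearMap.mem_ker]
    have hc := congrFun (congrArg DFunLike.coe (v.comm a)) x
    simp only [LinearMap.comp_apply] at hc
    rw [← hc, hx]
    refine Eq.trans ((cokerRep_map_mk (rmulArrow (K := K) a) a _).trans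
      (congrArg Submodule.Quotient.mk (projRep_map_single a Path.nil 1))) ?_
    refine (Submodule.Quotient.mk_eq_zero _).mpr ⟨Finsupp.single Path.nil 1, ?_⟩
    exact (rmulArrow_app_single a Path.nil 1).trans rfl
  rw [← (hses ja).2.2] at hker
  obtain ⟨y, hy⟩ := hker
  obtain ⟨z, hz⟩ := hsurj y
  set x' : E.space ia := x - u.app ia z with hx'def
  have hvx' : v.app ia x' = Submodule.Quotient.mk (Finsupp.single Path.nil 1) := by
    have huz : v.app ia (u.app ia z) = 0 := by
      have hm : u.app ia z ∈ LinearMap.ker (v.app ia) := by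
        rw [← (hses ia).2.2]; exact ⟨z, rfl⟩
      exact hm
    rw [hx'def, map_sub, huz, sub_zero, hx]
    rfl
  have hax' : E.map a x' = 0 := by
    have hcomm := congrFun (congrArg DFunLike.coe (u.comm a)) z
    simp only [LinearMap.comp_apply] at hcomm
    rw [hx'def, map_sub, hcomm, hz, hy, sub_self]
  -- right multiplication by `a` is killed
  have hkill : ∀ (k : V) (q : Path ja k), pathMap E ((a.toPath).comp q) x' = 0 := by
    intro k q
    rw [pathMap_comp, LinearMap.comp_apply]
    have h1 : pathMap E (a.toPath) x' = 0 := by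
      show pathMap E (Path.nil.cons a) x' = 0
      rw [pathMap_cons]
      simpa using hax'
    rw [h1, map_zero]
  have hlift : ∀ (k : V) (p : Path ia k) (c : K),
      (Finsupp.lift (E.space k) K (Path ia k) (fun r => pathMap E r x'))
        (Finsupp.single p c) = c • pathMap E p x' := by
    intro k p c
    rw [Finsupp.lift_apply]
    exact Finsupp.sum_single_index (zero_smul K _)
  have hφker : ∀ k : V, LinearMap.range ((rmulArrow (K := K) a).app k) ≤
      LinearMap.ker ((Finsupp.lift (E.space k) K (Path ia k)) (fun p => pathMap E p x')) := by
    intro k w hw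
    obtain ⟨g, rfl⟩ := hw
    show (Finsupp.lift (E.space k) K (Path ia k) (fun p => pathMap E p x'))
      ((rmulArrow (K := K) a).app k g) = 0
    have hz0 : (((Finsupp.lift (E.space k) K (Path ia k)) (fun p => pathMap E p x')).comp
        ((rmulArrow (K := K) a).app k)) = 0 := by
      refine Finsupp.lhom_ext fun q c => ?_
      show (Finsupp.lift (E.space k) K (Path ia k) (fun p => pathMap E p x'))
        ((rmulArrow (K := K) a).app k (Finsupp.single q c)) = 0
      refine Eq.trans (congrArg _ (rmulArrow_app_single a q c)) ?_
      exact (hlift k _ c).trans (by rw [hkill k q, smul_zero])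
    exact congrFun (congrArg DFunLike.coe hz0) g
  have hsmk : ∀ (k : V) (p : Path ia k) (c : K),
      Submodule.liftQ _ _ (hφker k) (Submodule.Quotient.mk (Finsupp.single p c)) =
        c • pathMap E p x' := by
    intro k p c
    exact (Submodule.liftQ_apply _ _ _).trans (hlift k p c)
  refine ⟨⟨fun k => Submodule.liftQ _ _ (hφker k), ?_⟩, ?_⟩
  · intro k l c
    refine Submodule.linearMap_qext _ ?_
    refine Finsupp.lhom_ext fun p d => ?_
    show E.map c (Submodule.liftQ _ _ (hφker k) (Submodule.Quotient.mk (Finsupp.single p d))) =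
      Submodule.liftQ _ _ (hφker l) ((cokerRep (rmulArrow (K := K) a)).map c
        (Submodule.Quotient.mk (Finsupp.single p d)))
    rw [hsmk k p d]
    have hmapc : (cokerRep (rmulArrow (K := K) a)).map c
        (Submodule.Quotient.mk (Finsupp.single p d)) =
        Submodule.Quotient.mk (Finsupp.single (p.cons c) d) :=
      (cokerRep_map_mk (rmulArrow (K := K) a) c _).trans
        (congrArg Submodule.Quotient.mk (projRep_map_single c p d))
    refine Eq.trans ?_ ((congrArg (Submodule.liftQ _ _ (hφker l)) hmapc).trans
      (hsmk l (p.cons c) d)).symm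
    rw [map_smul, pathMap_cons, LinearMap.comp_apply]
  · intro k
    refine Submodule.linearMap_qext _ ?_
    refine Finsupp.lhom_ext fun p d => ?_
    show v.app k (Submodule.liftQ _ _ (hφker k) (Submodule.Quotient.mk (Finsupp.single p d))) =
      Submodule.Quotient.mk (Finsupp.single p d)
    rw [hsmk k p d, map_smul]
    have hv : v.app k (pathMap E p x') = pathMap (Ca (K := K) a) p (v.app ia x') := by
      have hc := congrFun (congrArg DFunLike.coe (hom_pathMap v p)) x'
      simpa only [LinearMap.comp_apply] using hc
    rw [hv, hvx']
    have hproj : pathMap (Ca (K := K) a) p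
        (Submodule.Quotient.mk (Finsupp.single Path.nil 1)) =
        Submodule.Quotient.mk (pathMap (projRep K V ia) p (Finsupp.single Path.nil 1)) := by
      have hc := congrFun (congrArg DFunLike.coe
        (hom_pathMap (cokerProj (rmulArrow (K := K) a)) p)) (Finsupp.single Path.nil 1)
      exact hc.symm
    refine (congrArg (d • ·) hproj).trans ?_
    rw [pathMap_projRep, Path.nil_comp,
      show (Finsupp.single p d : Path ia k →₀ K) = d • Finsupp.single p 1 by
        rw [Finsupp.smul_single, smul_eq_mul, mul_one]]
    rfl
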